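/- arXiv:1412.8705 — 7 statements merged into one kernel-verified Lean document; each statement's English description precedes it below -/
import Mathlib

section
/- Let p_1,...,p_s be pairwise coprime integers ≥ 2, r_1,...,r_s ≥ 1, and P = p_1^{r_1} ⋯ p_s^{r_s}. For each i let M_i be the inverse of P/p_i^{r_i} modulo p_i^{r_i}. Given digits x_{i,j} ∈ {0,...,p_i−1}, set ẋ_i = Σ_{1≤j≤r_i} x_{i,j} p_i^{j−1} and ẍ = Σ_{i=1}^s M_i (P/p_i^{r_i}) ẋ_i. Then for every n ∈ ℕ: φ_{p_i}(n) ∈ [[x_i]_{r_i}, [x_i]_{r_i} + p_i^{−r_i}) for all i = 1,...,s if and only if n ≡ ẍ (mod P). -/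
open scoped Classical

section Aux

lemma mod_mul_decomp (n a b : ℕ) : n % (a * b) = a * (n / a % b) + n % a := by
  conv_lhs => rw [← Nat.div_add_mod (n % (a * b)) a]
  rw [Nat.mod_mul_right_div_self, Nat.mod_mul_right_mod]

lemma digitSum_lt {p : ℕ} (hp : 1 ≤ p) (r : ℕ) (c : ℕ → ℕ) (hc : ∀ i < r, c i < p) :
    ∑ i ∈ Finset.range r, c i * p ^ i < p ^ r := by
  induction r with
  | zero => simp
  | succ r ih =>
    rw [Finset.sum_range_succ, pow_succ]
    have h1 : ∑ i ∈ Finset.range r, c i * p ^ i < p ^ r :=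
      ih fun i hi => hc i (hi.trans (Nat.lt_succ_self r))
    have h2 : c r * p ^ r ≤ (p - 1) * p ^ r :=
      Nat.mul_le_mul_right _ (Nat.le_sub_one_of_lt (hc r (Nat.lt_succ_self r)))
    have h3 : p ^ r + (p - 1) * p ^ r = p ^ r * p := by
      have h4 : p ^ r + (p - 1) * p ^ r = (1 + (p - 1)) * p ^ r := by ring
      have h5 : 1 + (p - 1) = p := by omega
      rw [h4, h5, mul_comm]
    omega

lemma digits_eq {p : ℕ} (hp : 1 ≤ p) (r n : ℕ) (c : ℕ → ℕ) (hc : ∀ i < r, c i < p) :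
    n % p ^ r = ∑ i ∈ Finset.range r, c i * p ^ i ↔ ∀ i < r, n / p ^ i % p = c i := by
  induction r with
  | zero => simp [Nat.mod_one]
  | succ r ih =>
    have hc' : ∀ i < r, c i < p := fun i hi => hc i (hi.trans (Nat.lt_succ_self r))
    have hpr : 0 < p ^ r := Nat.pow_pos hp
    have hm : n % p ^ r < p ^ r := Nat.mod_lt _ hpr
    have ht : ∑ i ∈ Finset.range r, c i * p ^ i < p ^ r := digitSum_lt hp r c hc'
    rw [pow_succ, mod_mul_decomp, Finset.sum_range_succ]
    constructor
    · intro h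
      have hd : n / p ^ r % p = c r := by
        have h2 := congrArg (· / p ^ r) h
        simp only [Nat.mul_add_div hpr, Nat.add_mul_div_right _ _ hpr,
          Nat.div_eq_of_lt hm, Nat.div_eq_of_lt ht] at h2
        omega
      have hm' : n % p ^ r = ∑ i ∈ Finset.range r, c i * p ^ i := by
        rw [hd, mul_comm] at h; omega
      intro i hi
      rcases Nat.lt_succ_iff_lt_or_eq.1 hi with hi' | hi'
      · exact (ih hc').1 hm' i hi'
      · subst hi'; exact hd
    · intro h
      have h1 : n % p ^ r = ∑ i ∈ Finset.range r, c i * p ^ i :=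
        (ih hc').2 fun i hi => h i (hi.trans (Nat.lt_succ_self r))
      have h2 : n / p ^ r % p = c r := h r (Nat.lt_succ_self r)
      rw [h1, h2]; ring

lemma rev_sum_eq (p r : ℕ) (a : ℕ → ℕ) :
    ∑ i ∈ Finset.range r, a i * p ^ (r - 1 - i) =
      ∑ j ∈ Finset.range r, a (r - 1 - j) * p ^ j := by
  rw [← Finset.sum_range_reflect (fun j => a (r - 1 - j) * p ^ j) r]
  refine Finset.sum_congr rfl fun i hi => ?_
  have hi' := Finset.mem_range.1 hi
  have e1 : r - 1 - (r - 1 - i) = i := by omega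
  have e2 : r - 1 - i = r - 1 - i := rfl
  rw [e1]

lemma rev_unique {p : ℕ} (hp : 1 ≤ p) (r : ℕ) (a b : ℕ → ℕ)
    (ha : ∀ i < r, a i < p) (hb : ∀ i < r, b i < p)
    (h : ∑ i ∈ Finset.range r, a i * p ^ (r - 1 - i) =
         ∑ i ∈ Finset.range r, b i * p ^ (r - 1 - i)) :
    ∀ i < r, a i = b i := by
  rw [rev_sum_eq, rev_sum_eq] at h
  set m := ∑ j ∈ Finset.range r, a (r - 1 - j) * p ^ j with hm
  have hc : ∀ j < r, a (r - 1 - j) < p := fun j hj => ha _ (by omega)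
  have hd : ∀ j < r, b (r - 1 - j) < p := fun j hj => hb _ (by omega)
  have hml : m < p ^ r := digitSum_lt hp r _ hc
  have hmm : m % p ^ r = m := Nat.mod_eq_of_lt hml
  have h1 : ∀ j < r, m / p ^ j % p = a (r - 1 - j) :=
    (digits_eq hp r m _ hc).1 hmm
  have h2 : ∀ j < r, m / p ^ j % p = b (r - 1 - j) :=
    (digits_eq hp r m _ hd).1 (by rw [hmm, h])
  intro i hi
  have := (h1 (r - 1 - i) (by omega)).symm.trans (h2 (r - 1 - i) (by omega))
  have he : r - 1 - (r - 1 - i) = i := by omega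
  rwa [he] at this

end Aux

/-- Base-`p` radical inverse (van der Corput) of `n`. -/
noncomputable def radInv (p n : ℕ) : ℝ :=
  ∑ i ∈ Finset.range n, ((n / p ^ i % p : ℕ) : ℝ) / (p : ℝ) ^ (i + 1)

section Real

lemma digit_zero {p n i : ℕ} (hp : 2 ≤ p) (h : n ≤ i) : n / p ^ i % p = 0 := by
  have h1 : n < 2 ^ i := lt_of_le_of_lt h (Nat.lt_two_pow_self)
  have h2 : (2:ℕ) ^ i ≤ p ^ i := Nat.pow_le_pow_left hp i
  rw [Nat.div_eq_of_lt (lt_of_lt_of_le h1 h2)]; simp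

lemma tail_le {p n : ℕ} (hp : 2 ≤ p) (r : ℕ) :
    ∀ m, r ≤ m → ∑ i ∈ Finset.Ico r m, ((n / p ^ i % p : ℕ) : ℝ) / (p : ℝ) ^ (i + 1)
      ≤ ((p : ℝ) ^ r)⁻¹ - ((p : ℝ) ^ m)⁻¹ := by
  have hp0 : (0:ℝ) < (p:ℝ) := by positivity
  have hp1 : (1:ℝ) ≤ (p:ℝ) := by exact_mod_cast hp.trans' (by norm_num)
  refine Nat.le_induction ?_ ?_
  · simp
  · intro m hm ih
    rw [Finset.sum_Ico_succ_top hm]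
    have hd : ((n / p ^ m % p : ℕ) : ℝ) ≤ (p : ℝ) - 1 := by
      have h1 : n / p ^ m % p ≤ p - 1 := Nat.le_sub_one_of_lt (Nat.mod_lt _ (by omega))
      have h2 : ((n / p ^ m % p : ℕ) : ℝ) ≤ ((p - 1 : ℕ) : ℝ) := Nat.cast_le.2 h1
      rwa [Nat.cast_sub (by omega), Nat.cast_one] at h2
    have hkey : ((p : ℝ) - 1) / (p : ℝ) ^ (m + 1) = ((p:ℝ)^m)⁻¹ - ((p:ℝ)^(m+1))⁻¹ := by
      field_simp
      ring
    have hden : (0:ℝ) < (p:ℝ) ^ (m+1) := by positivity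
    have : ((n / p ^ m % p : ℕ) : ℝ) / (p : ℝ) ^ (m + 1) ≤ ((p:ℝ)^m)⁻¹ - ((p:ℝ)^(m+1))⁻¹ := by
      rw [← hkey]; gcongr
    linarith [ih]

lemma radInv_head {p : ℕ} (hp : 2 ≤ p) (n r : ℕ) :
    (∑ i ∈ Finset.range r, ((n / p ^ i % p : ℕ) : ℝ) / (p : ℝ) ^ (i + 1)) ≤ radInv p n ∧
    radInv p n < (∑ i ∈ Finset.range r, ((n / p ^ i % p : ℕ) : ℝ) / (p : ℝ) ^ (i + 1))
      + ((p : ℝ) ^ r)⁻¹ := by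
  have hp0 : (0:ℝ) < (p:ℝ) := by positivity
  have hinv : (0:ℝ) < ((p:ℝ)^r)⁻¹ := by positivity
  rcases le_or_gt n r with h | h
  · have heq : radInv p n
        = ∑ i ∈ Finset.range r, ((n / p ^ i % p : ℕ) : ℝ) / (p : ℝ) ^ (i + 1) := by
      unfold radInv
      refine Finset.sum_subset (Finset.range_subset_range.2 h) fun i _ hi => ?_
      rw [digit_zero hp (le_of_not_gt (fun hc => hi (Finset.mem_range.2 hc)))]
      simp
    constructor
    · rw [heq]
    · rw [heq]; linarith
  · have hsplit : radInv p n
        = (∑ i ∈ Finset.range r, ((n / p ^ i % p : ℕ) : ℝ) / (p : ℝ) ^ (i + 1))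
          + ∑ i ∈ Finset.Ico r n, ((n / p ^ i % p : ℕ) : ℝ) / (p : ℝ) ^ (i + 1) := by
      unfold radInv
      rw [Finset.range_eq_Ico, Finset.range_eq_Ico]
      exact (Finset.sum_Ico_consecutive (fun i => ((n / p ^ i % p : ℕ) : ℝ) / (p : ℝ) ^ (i + 1)) (Nat.zero_le r) h.le).symm
    have htail := tail_le (n := n) hp r n h.le
    have htail0 : (0:ℝ) ≤ ∑ i ∈ Finset.Ico r n, ((n / p ^ i % p : ℕ) : ℝ) / (p : ℝ) ^ (i + 1) :=
      Finset.sum_nonneg fun i _ => by positivity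
    have hinvn : (0:ℝ) < ((p:ℝ)^n)⁻¹ := by positivity
    constructor
    · rw [hsplit]; linarith
    · rw [hsplit]; linarith

lemma sum_div_pow {p : ℕ} (hp : 2 ≤ p) (r : ℕ) (a : ℕ → ℕ) :
    ((∑ i ∈ Finset.range r, a i * p ^ (r - 1 - i) : ℕ) : ℝ) / (p : ℝ) ^ r
      = ∑ i ∈ Finset.range r, (a i : ℝ) / (p : ℝ) ^ (i + 1) := by
  have hp0 : (0:ℝ) < (p:ℝ) := by positivity
  push_cast
  rw [Finset.sum_div]
  refine Finset.sum_congr rfl fun i hi => ?_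
  have hi' := Finset.mem_range.1 hi
  rw [div_eq_div_iff (by positivity) (by positivity), mul_assoc, ← pow_add]
  congr 2
  omega

lemma interval_iff {q : ℝ} (hq : 0 < q) (hN aN : ℕ) (X : ℝ)
    (h1 : (hN : ℝ) / q ≤ X) (h2 : X < (hN : ℝ) / q + q⁻¹) :
    ((aN : ℝ) / q ≤ X ∧ X < (aN : ℝ) / q + q⁻¹) ↔ hN = aN := by
  constructor
  · rintro ⟨g1, g2⟩
    have e : ∀ m : ℕ, (m : ℝ) / q + q⁻¹ = ((m : ℝ) + 1) / q := by
      intro m; rw [add_div, inv_eq_one_div]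
    have c1 : (aN : ℝ) / q < ((hN : ℝ) + 1) / q := by rw [← e]; exact g1.trans_lt h2
    have c2 : (hN : ℝ) / q < ((aN : ℝ) + 1) / q := by rw [← e]; exact h1.trans_lt g2
    have d1 : aN < hN + 1 := by exact_mod_cast (div_lt_div_iff_of_pos_right hq).1 c1
    have d2 : hN < aN + 1 := by exact_mod_cast (div_lt_div_iff_of_pos_right hq).1 c2
    omega
  · rintro rfl; exact ⟨h1, h2⟩

lemma indexA {p : ℕ} (hp : 2 ≤ p) (r n : ℕ) (x : ℕ → ℕ)
    (hx : ∀ j, 1 ≤ j → j ≤ r → x j < p) :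
    ((∑ j ∈ Finset.Icc 1 r, (x j : ℝ) / (p : ℝ) ^ j) ≤ radInv p n ∧
      radInv p n < (∑ j ∈ Finset.Icc 1 r, (x j : ℝ) / (p : ℝ) ^ j) + ((p : ℝ) ^ r)⁻¹) ↔
    n % p ^ r = ∑ j ∈ Finset.Icc 1 r, x j * p ^ (j - 1) := by
  have hp0 : (0:ℝ) < (p:ℝ) ^ r := by positivity
  have hIccR : ∀ (f : ℕ → ℝ), ∑ j ∈ Finset.Icc 1 r, f j = ∑ i ∈ Finset.range r, f (1 + i) := by
    intro f
    rw [← Finset.Ico_add_one_right_eq_Icc, Finset.sum_Ico_eq_sum_range]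
    simp
  have hIccN : ∀ (f : ℕ → ℕ), ∑ j ∈ Finset.Icc 1 r, f j = ∑ i ∈ Finset.range r, f (1 + i) := by
    intro f
    rw [← Finset.Ico_add_one_right_eq_Icc, Finset.sum_Ico_eq_sum_range]
    simp
  have hA : (∑ j ∈ Finset.Icc 1 r, (x j : ℝ) / (p : ℝ) ^ j)
      = ∑ i ∈ Finset.range r, ((x (1 + i) : ℕ) : ℝ) / (p : ℝ) ^ (i + 1) := by
    rw [hIccR]
    exact Finset.sum_congr rfl fun i _ => by rw [add_comm 1 i]
  have hxd : ∀ i < r, x (1 + i) < p := fun i hi => hx (1 + i) (by omega) (by omega)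
  have hdd : ∀ i < r, n / p ^ i % p < p := fun i _ => Nat.mod_lt _ (by omega)
  set hN : ℕ := ∑ i ∈ Finset.range r, (n / p ^ i % p) * p ^ (r - 1 - i) with hNdef
  set aN : ℕ := ∑ i ∈ Finset.range r, x (1 + i) * p ^ (r - 1 - i) with aNdef
  have hH : ((hN : ℝ)) / (p : ℝ) ^ r
      = ∑ i ∈ Finset.range r, ((n / p ^ i % p : ℕ) : ℝ) / (p : ℝ) ^ (i + 1) :=
    sum_div_pow hp r _
  have hAeq : ((aN : ℝ)) / (p : ℝ) ^ r
      = ∑ i ∈ Finset.range r, ((x (1 + i) : ℕ) : ℝ) / (p : ℝ) ^ (i + 1) :=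
    sum_div_pow hp r _
  obtain ⟨hb1, hb2⟩ := radInv_head hp n r
  rw [← hH] at hb1 hb2
  rw [hA, ← hAeq, interval_iff hp0 hN aN (radInv p n) hb1 hb2]
  have step1 : hN = aN ↔ ∀ i < r, n / p ^ i % p = x (1 + i) := by
    constructor
    · intro h; exact rev_unique (by omega) r _ _ hdd hxd h
    · intro h
      exact Finset.sum_congr rfl fun i hi => by rw [h i (Finset.mem_range.1 hi)]
  have step2 : n % p ^ r = ∑ j ∈ Finset.Icc 1 r, x j * p ^ (j - 1)
      ↔ ∀ i < r, n / p ^ i % p = x (1 + i) := by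
    rw [hIccN fun j => x j * p ^ (j - 1)]
    have : ∑ i ∈ Finset.range r, x (1 + i) * p ^ (1 + i - 1)
        = ∑ i ∈ Finset.range r, x (1 + i) * p ^ i := by
      refine Finset.sum_congr rfl fun i _ => by rw [Nat.add_sub_cancel_left]
    rw [this]
    exact digits_eq (by omega) r n _ hxd
  rw [step1, step2]

lemma xdot_lt {p : ℕ} (hp : 2 ≤ p) (r : ℕ) (x : ℕ → ℕ)
    (hx : ∀ j, 1 ≤ j → j ≤ r → x j < p) :
    ∑ j ∈ Finset.Icc 1 r, x j * p ^ (j - 1) < p ^ r := by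
  have hIccN : ∀ (f : ℕ → ℕ), ∑ j ∈ Finset.Icc 1 r, f j = ∑ i ∈ Finset.range r, f (1 + i) := by
    intro f
    rw [← Finset.Ico_add_one_right_eq_Icc, Finset.sum_Ico_eq_sum_range]
    simp
  rw [hIccN fun j => x j * p ^ (j - 1)]
  have : ∑ i ∈ Finset.range r, x (1 + i) * p ^ (1 + i - 1)
      = ∑ i ∈ Finset.range r, x (1 + i) * p ^ i :=
    Finset.sum_congr rfl fun i _ => by rw [Nat.add_sub_cancel_left]
  rw [this]
  exact digitSum_lt (by omega) r _ fun i hi => hx (1 + i) (by omega) (by omega)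

end Real

theorem stmt1 (s : ℕ) (hs : 1 ≤ s) (p r M : Fin s → ℕ)
    (hp : ∀ i, 2 ≤ p i) (hco : ∀ i j, i ≠ j → Nat.Coprime (p i) (p j))
    (hr : ∀ i, 1 ≤ r i)
    (P : ℕ) (hP : P = ∏ i, p i ^ r i)
    (hM : ∀ i, M i * (P / p i ^ r i) ≡ 1 [MOD p i ^ r i])
    (x : Fin s → ℕ → ℕ) (hx : ∀ i j, 1 ≤ j → j ≤ r i → x i j < p i)
    (n : ℕ) :
    (∀ i, (∑ j ∈ Finset.Icc 1 (r i), (x i j : ℝ) / (p i : ℝ) ^ j) ≤ radInv (p i) n ∧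
        radInv (p i) n <
          (∑ j ∈ Finset.Icc 1 (r i), (x i j : ℝ) / (p i : ℝ) ^ j) + ((p i : ℝ) ^ r i)⁻¹) ↔
    n ≡ ∑ i, M i * (P / p i ^ r i) *
        (∑ j ∈ Finset.Icc 1 (r i), x i j * p i ^ (j - 1)) [MOD P] := by
  set Q : Fin s → ℕ := fun i => p i ^ r i with hQ
  set X : Fin s → ℕ := fun i => ∑ j ∈ Finset.Icc 1 (r i), x i j * p i ^ (j - 1) with hX
  set Y : ℕ := ∑ i, M i * (P / Q i) * X i with hY
  have hQpos : ∀ i, 0 < Q i := fun i => Nat.pow_pos (by have := hp i; omega)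
  have hdivP : ∀ j, P / Q j = ∏ k ∈ Finset.univ.erase j, Q k := by
    intro j
    rw [hP, ← Finset.mul_prod_erase _ _ (Finset.mem_univ j),
      Nat.mul_div_cancel_left _ (hQpos j)]
  have hQdvdP : ∀ i, Q i ∣ P := fun i => hP ▸ Finset.dvd_prod_of_mem _ (Finset.mem_univ i)
  have hdvd : ∀ i j, i ≠ j → Q i ∣ P / Q j := by
    intro i j hij
    rw [hdivP j]
    exact Finset.dvd_prod_of_mem _ (Finset.mem_erase.2 ⟨hij, Finset.mem_univ i⟩)
  have claim1 : ∀ i, Y ≡ X i [MOD Q i] := by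
    intro i
    rw [hY, ← Finset.add_sum_erase _ _ (Finset.mem_univ i)]
    have t1 : M i * (P / Q i) * X i ≡ 1 * X i [MOD Q i] := (hM i).mul_right _
    have t2 : (∑ j ∈ Finset.univ.erase i, M j * (P / Q j) * X j) ≡ 0 [MOD Q i] := by
      refine (Nat.modEq_zero_iff_dvd).2 (Finset.dvd_sum fun j hj => ?_)
      have hij : i ≠ j := (Finset.mem_erase.1 hj).1.symm
      exact ((hdvd i j hij).mul_left (M j)).mul_right (X j)
    simpa using t1.add t2
  have claim2 : (n ≡ Y [MOD P]) ↔ ∀ i, n ≡ Y [MOD Q i] := by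
    constructor
    · exact fun h i => h.of_dvd (hQdvdP i)
    · intro h
      rw [Nat.modEq_iff_dvd]
      have hcast : (P : ℤ) = ∏ i, (Q i : ℤ) := by rw [hP, Nat.cast_prod]
      rw [hcast]
      refine Finset.prod_dvd_of_coprime ?_ fun i _ => Nat.modEq_iff_dvd.1 (h i)
      intro i _ j _ hij
      show IsCoprime ((Q i : ℕ) : ℤ) ((Q j : ℕ) : ℤ)
      have hcp : Nat.Coprime (p i ^ r i) (p j ^ r j) := Nat.Coprime.pow (r i) (r j) (hco i j hij)
      exact Nat.isCoprime_iff_coprime.2 hcp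
  have claim3 : ∀ i, (n ≡ X i [MOD Q i] ↔ n % Q i = X i) := by
    intro i
    have hlt : X i < Q i := xdot_lt (hp i) (r i) (x i) (hx i)
    rw [Nat.ModEq, Nat.mod_eq_of_lt hlt]
  constructor
  · intro h
    rw [claim2]
    intro i
    have := (indexA (hp i) (r i) n (x i) (hx i)).1 (h i)
    exact ((claim3 i).2 this).trans (claim1 i).symm
  · intro h i
    refine (indexA (hp i) (r i) n (x i) (hx i)).2 ?_
    exact (claim3 i).1 ((claim2.1 h i).trans (claim1 i))
end

section
/- Let p_1,...,p_s be pairwise coprime integers ≥ 2, and for each i let τ_i be the multiplicative order condition p_j^{τ_j} ≡ 1 (mod p_i) for all i ≠ j. Let k_1,...,k_s ≥ 1, P = p_1^{τ_1 k_1} ⋯ p_s^{τ_s k_s}, and M_i the inverse of P/p_i^{τ_i k_i} modulo p_i^{τ_i k_i}. Then M_i ≡ 1 (mod p_i) for each i = 1,...,s. -/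
theorem stmt3 (s : ℕ) (hs : 1 ≤ s) (p τ k M : Fin s → ℕ)
    (hp : ∀ i, 2 ≤ p i) (hco : ∀ i j, i ≠ j → Nat.Coprime (p i) (p j))
    (hτ1 : ∀ i, 1 ≤ τ i)
    (hτ : ∀ i j, i ≠ j → p j ^ τ j ≡ 1 [MOD p i])
    (hk : ∀ i, 1 ≤ k i)
    (P : ℕ) (hP : P = ∏ i, p i ^ (τ i * k i))
    (hM : ∀ i, M i * (P / p i ^ (τ i * k i)) ≡ 1 [MOD p i ^ (τ i * k i)]) :
    ∀ i, M i ≡ 1 [MOD p i] := by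
  intro i
  have hpi : 0 < p i := lt_of_lt_of_le two_pos (hp i)
  have hpos : 0 < p i ^ (τ i * k i) := pow_pos hpi _
  set Q := ∏ j ∈ Finset.univ.erase i, p j ^ (τ j * k j) with hQ
  have hPQ : P = p i ^ (τ i * k i) * Q := by
    rw [hP, ← Finset.mul_prod_erase _ _ (Finset.mem_univ i)]
  have hdiv : P / p i ^ (τ i * k i) = Q := by
    rw [hPQ, Nat.mul_div_cancel_left _ hpos]
  have hQ1 : Q ≡ 1 [MOD p i] := by
    rw [hQ, ← ZMod.natCast_eq_natCast_iff]
    push_cast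
    show (∏ j ∈ Finset.univ.erase i, ((p j : ZMod (p i)) ^ (τ j * k j))) = 1
    refine Finset.prod_eq_one fun j hj => ?_
    have hji : j ≠ i := (Finset.mem_erase.mp hj).1
    have := (ZMod.natCast_eq_natCast_iff _ _ _).mpr (hτ i j (Ne.symm hji))
    push_cast at this
    rw [pow_mul, this, one_pow]
  have hMQ : M i * Q ≡ 1 [MOD p i] := by
    have h1 := hM i
    rw [hdiv] at h1
    have hdvd : p i ∣ p i ^ (τ i * k i) :=
      dvd_pow_self _ (Nat.mul_pos (hτ1 i) (hk i)).ne'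
    exact h1.of_dvd hdvd
  calc M i = M i * 1 := (mul_one _).symm
    _ ≡ M i * Q [MOD p i] := (Nat.ModEq.refl _).mul hQ1.symm
    _ ≡ 1 [MOD p i] := hMQ
end

section
/- Let p_1,...,p_s be pairwise coprime integers ≥ 2 with s ≥ 2. Then 1/p_1 + 1/p_2 + ⋯ + 1/p_s is not congruent to 1/2 modulo 1; i.e., 2(p_0/p_1 + ⋯ + p_0/p_s) ≢ p_0 (mod 2p_0), where p_0 = p_1⋯p_s. -/
theorem stmt4 (s : ℕ) (hs : 2 ≤ s) (p : Fin s → ℕ)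
    (hp : ∀ i, 2 ≤ p i) (hco : ∀ i j, i ≠ j → Nat.Coprime (p i) (p j)) :
    ¬ (2 * ∑ i, (∏ j, p j) / p i ≡ (∏ j, p j) [MOD 2 * ∏ j, p j]) := by
  intro h
  -- key: every p j equals 2
  have key : ∀ j, p j = 2 := by
    intro j
    have hpj : 0 < p j := by have := hp j; omega
    have hprod : ∏ l, p l = p j * ∏ l ∈ Finset.univ.erase j, p l :=
      (Finset.mul_prod_erase _ _ (Finset.mem_univ j)).symm
    have hdivj : (∏ l, p l) / p j = ∏ l ∈ Finset.univ.erase j, p l := by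
      rw [hprod, Nat.mul_div_cancel_left _ hpj]
    have hcop : Nat.Coprime (p j) (∏ l ∈ Finset.univ.erase j, p l) := by
      apply Nat.Coprime.prod_right
      intro l hl
      exact hco j l (Ne.symm (Finset.ne_of_mem_erase hl))
    -- descend the congruence to modulus p j
    have hdvd2P : p j ∣ 2 * ∏ l, p l := Dvd.dvd.mul_left (Finset.dvd_prod_of_mem p (Finset.mem_univ j)) 2
    have hj : 2 * ∑ i, (∏ l, p l) / p i ≡ (∏ l, p l) [MOD p j] :=
      h.of_dvd hdvd2P
    -- move to ZMod (p j)
    have hz : ((2 * ∑ i, (∏ l, p l) / p i : ℕ) : ZMod (p j)) = ((∏ l, p l : ℕ) : ZMod (p j)) :=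
      (ZMod.natCast_eq_natCast_iff _ _ _).mpr hj
    have hP0 : ((∏ l, p l : ℕ) : ZMod (p j)) = 0 :=
      (ZMod.natCast_eq_zero_iff _ _).mpr
        (Finset.dvd_prod_of_mem p (Finset.mem_univ j))
    have hsum : ((∑ i, (∏ l, p l) / p i : ℕ) : ZMod (p j))
        = (((∏ l, p l) / p j : ℕ) : ZMod (p j)) := by
      push_cast
      rw [Finset.sum_eq_single j]
      · intro i _ hij
        have : p j ∣ (∏ l, p l) / p i := by
          have hpi : 0 < p i := by have := hp i; omega
          have hprodi : (∏ l, p l) / p i = ∏ l ∈ Finset.univ.erase i, p l := by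
            rw [show ∏ l, p l = p i * ∏ l ∈ Finset.univ.erase i, p l from
              (Finset.mul_prod_erase _ _ (Finset.mem_univ i)).symm,
              Nat.mul_div_cancel_left _ hpi]
          rw [hprodi]
          exact Finset.dvd_prod_of_mem p (Finset.mem_erase.mpr ⟨Ne.symm hij, Finset.mem_univ j⟩)
        exact (ZMod.natCast_eq_zero_iff _ _).mpr this
      · intro hj'; exact absurd (Finset.mem_univ j) hj'
    have h2 : ((2 * ((∏ l, p l) / p j) : ℕ) : ZMod (p j)) = 0 := by
      rw [Nat.cast_mul, ← hsum, ← Nat.cast_mul, hz, hP0]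
    have hdvd : p j ∣ 2 * ((∏ l, p l) / p j) :=
      (ZMod.natCast_eq_zero_iff _ _).mp h2
    have : p j ∣ 2 := by
      rw [hdivj] at hdvd
      exact (Nat.Coprime.dvd_of_dvd_mul_right hcop hdvd)
    have := Nat.le_of_dvd (by norm_num) this
    have := hp j
    omega
  -- contradiction with coprimality
  have h01 : (⟨0, by omega⟩ : Fin s) ≠ ⟨1, by omega⟩ := by
    intro hcon
    simpa using congrArg Fin.val hcon
  have := hco ⟨0, by omega⟩ ⟨1, by omega⟩ h01
  rw [key, key] at this
  simp [Nat.Coprime] at this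
end

section
/- Let p_1,...,p_s be pairwise coprime integers ≥ 2 with s ≥ 2, p_0 = p_1⋯p_s, and β = 1/p_1 + ⋯ + 1/p_s. Then |1/2 − {−β}| ≥ 1/(2p_0), where {x} denotes the fractional part of x. -/
theorem stmt5 (s : ℕ) (hs : 2 ≤ s) (p : Fin s → ℕ)
    (hp : ∀ i, 2 ≤ p i) (hco : ∀ i j, i ≠ j → Nat.Coprime (p i) (p j)) :
    1 / (2 * ∏ i, (p i : ℝ)) ≤ |1 / 2 - Int.fract (- ∑ i, 1 / (p i : ℝ))| := by
  classical
  set P : ℕ := ∏ i, p i with hPdef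
  have hppos : ∀ i, 0 < p i := fun i => lt_of_lt_of_le two_pos (hp i)
  have hPpos : 0 < P := Finset.prod_pos fun i _ => hppos i
  have hPR : (∏ i, (p i : ℝ)) = (P : ℝ) := by rw [hPdef]; push_cast; rfl
  have hPRpos : (0 : ℝ) < (P : ℝ) := by exact_mod_cast hPpos
  set q : Fin s → ℕ := fun i => ∏ j ∈ Finset.univ.erase i, p j with hqdef
  have hpq : ∀ i, p i * q i = P := fun i => Finset.mul_prod_erase _ _ (Finset.mem_univ i)
  set Q : ℕ := ∑ i, q i with hQdef
  have hsum : ∑ i, 1 / (p i : ℝ) = (Q : ℝ) / (P : ℝ) := by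
    rw [hQdef, Nat.cast_sum, Finset.sum_div]
    refine Finset.sum_congr rfl fun i _ => ?_
    have hpi : (0:ℝ) < (p i : ℝ) := by exact_mod_cast hppos i
    rw [div_eq_div_iff hpi.ne' hPRpos.ne', one_mul]
    exact_mod_cast (by rw [mul_comm]; exact (hpq i).symm : P = q i * p i)
  have hfract : Int.fract (- ∑ i, 1 / (p i : ℝ)) = ((-(Q:ℤ)) % (P:ℤ) : ℤ) / (P : ℝ) := by
    rw [hsum]
    have : -((Q:ℝ) / (P:ℝ)) = ((-(Q:ℤ) : ℤ) : ℝ) / (P : ℕ) := by push_cast; ring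
    rw [this, Int.fract_div_intCast_eq_div_intCast_mod]
  set m : ℤ := (-(Q:ℤ)) % (P:ℤ) with hmdef
  have hPdvd : (P : ℤ) ∣ m + Q := by
    have h := Int.emod_add_mul_ediv (-(Q:ℤ)) (P:ℤ)
    exact ⟨-((-(Q:ℤ)) / (P:ℤ)), by rw [hmdef]; linarith [h]⟩
  have hne : (P : ℤ) ≠ 2 * m := by
    intro hPe
    have h2Q : (P : ℤ) ∣ 2 * Q := by
      obtain ⟨c, hc⟩ := hPdvd
      exact ⟨2 * c - 1, by linarith [hc, hPe]⟩
    have h2Qn : P ∣ 2 * Q := by exact_mod_cast Int.ofNat_dvd.mp (by exact_mod_cast h2Q)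
    have hdvd2 : ∀ i, p i = 2 := by
      intro i
      have hpiP : p i ∣ P := ⟨q i, (hpq i).symm⟩
      have hpi2Q : p i ∣ 2 * Q := hpiP.trans h2Qn
      have hrest : p i ∣ 2 * (Q - q i) := by
        refine Dvd.dvd.mul_left ?_ 2
        have : Q - q i = ∑ j ∈ Finset.univ.erase i, q j := by
          rw [hQdef, ← Finset.sum_erase_add _ _ (Finset.mem_univ i)]
          simp
        rw [this]
        refine Finset.dvd_sum fun j hj => ?_
        have hij : i ≠ j := fun h => (Finset.mem_erase.mp hj).1 h.symm
        exact Finset.dvd_prod_of_mem _ (Finset.mem_erase.mpr ⟨hij, Finset.mem_univ i⟩)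
      have hqle : q i ≤ Q := by
        rw [hQdef]
        exact Finset.single_le_sum (fun j _ => Nat.zero_le (q j)) (Finset.mem_univ i)
      have hpi2q : p i ∣ 2 * q i := by
        have h := Nat.dvd_sub hpi2Q hrest
        have he : 2 * Q - 2 * (Q - q i) = 2 * q i := by omega
        rwa [he] at h
      have hcop : (p i).Coprime (q i) :=
        Nat.Coprime.prod_right fun j hj => hco i j fun h => (Finset.mem_erase.mp hj).1 h.symm
      have hpd2 : p i ∣ 2 := hcop.dvd_of_dvd_mul_right hpi2q
      exact le_antisymm (Nat.le_of_dvd two_pos hpd2) (hp i)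
    have h01 : (⟨0, by omega⟩ : Fin s) ≠ ⟨1, by omega⟩ := by simp [Fin.ext_iff]
    have := hco ⟨0, by omega⟩ ⟨1, by omega⟩ h01
    rw [hdvd2, hdvd2] at this
    simp [Nat.Coprime] at this
  have hm0 : 0 ≤ m := Int.emod_nonneg _ (by exact_mod_cast hPpos.ne')
  have hmP : m < P := Int.emod_lt_of_pos _ (by exact_mod_cast hPpos)
  rw [hfract, hPR]
  have key : (1 : ℝ) ≤ |(P : ℝ) - 2 * m| := by
    have : (P : ℤ) - 2 * m ≠ 0 := by omega
    have h1 : (1 : ℤ) ≤ |(P : ℤ) - 2 * m| := Int.one_le_abs this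
    calc (1:ℝ) = ((1:ℤ):ℝ) := by norm_num
    _ ≤ ((|(P : ℤ) - 2 * m| : ℤ) : ℝ) := by exact_mod_cast h1
    _ = |(P : ℝ) - 2 * m| := by push_cast [Int.cast_abs]; ring_nf
  have heq : |1 / 2 - (m : ℝ) / (P : ℝ)| = |(P : ℝ) - 2 * m| / (2 * P) := by
    have h : 1 / 2 - (m : ℝ) / (P : ℝ) = ((P : ℝ) - 2 * m) / (2 * P) := by
      field_simp
    rw [h, abs_div, abs_of_pos (by positivity : (0:ℝ) < 2 * P)]
  rw [heq]
  gcongr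
end

section
/- Suppose p_0 = p_1⋯p_s is even, say p_ν is even for some ν. If b_1 = p_0(p_ν/2 − 1)/p_ν and b_2 = Σ_{i≠ν} p_0/p_i satisfy b_1 ≡ b_2 (mod p_0), then a contradiction arises: for any j ≠ ν, b_1 ≡ 0 (mod p_j) while b_2 ≢ 0 (mod p_j). Formally: for pairwise coprime p_1,...,p_s ≥ 2 with s ≥ 2 and p_ν even, p_0(p_ν/2 − 1)/p_ν ≢ Σ_{i≠ν} p_0/p_i (mod p_0). -/
theorem stmt6 (s : ℕ) (hs : 2 ≤ s) (p : Fin s → ℕ)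
    (hp : ∀ i, 2 ≤ p i) (hco : ∀ i j, i ≠ j → Nat.Coprime (p i) (p j))
    (ν : Fin s) (hν : 2 ∣ p ν) :
    ¬ ((∏ i, p i) / p ν * (p ν / 2 - 1) ≡
        ∑ i ∈ Finset.univ.erase ν, (∏ j, p j) / p i [MOD ∏ i, p i]) := by
  intro h
  obtain ⟨j, hj⟩ : ∃ j : Fin s, j ≠ ν := by
    have : 1 < Fintype.card (Fin s) := by simp; omega
    exact Fintype.exists_ne_of_one_lt_card this ν
  have hpos : ∀ i : Fin s, 0 < p i := fun i => lt_of_lt_of_le two_pos (hp i)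
  have hdiv : ∀ i : Fin s, (∏ k, p k) / p i = ∏ k ∈ Finset.univ.erase i, p k := by
    intro i
    rw [← Finset.mul_prod_erase _ _ (Finset.mem_univ i)]
    exact Nat.mul_div_cancel_left _ (hpos i)
  -- p j divides b1
  have h1 : p j ∣ (∏ i, p i) / p ν * (p ν / 2 - 1) := by
    refine Dvd.dvd.mul_right ?_ _
    rw [hdiv ν]
    exact Finset.dvd_prod_of_mem _ (by simp [hj])
  -- sum splits
  have hjmem : j ∈ Finset.univ.erase ν := by simp [hj]
  have hsum : ∑ i ∈ Finset.univ.erase ν, (∏ k, p k) / p i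
      = (∏ k, p k) / p j + ∑ i ∈ (Finset.univ.erase ν).erase j, (∏ k, p k) / p i :=
    (Finset.add_sum_erase _ _ hjmem).symm
  have hrest : p j ∣ ∑ i ∈ (Finset.univ.erase ν).erase j, (∏ k, p k) / p i := by
    refine Finset.dvd_sum ?_
    intro i hi
    have hij : i ≠ j := (Finset.mem_erase.mp hi).1
    rw [hdiv i]
    exact Finset.dvd_prod_of_mem _ (by simp [Ne.symm hij])
  -- transfer h to mod p j
  have hpj : p j ∣ ∏ i, p i := Finset.dvd_prod_of_mem _ (Finset.mem_univ j)
  have h' := (h.of_dvd hpj)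
  have h0 : (0 : ℕ) ≡ (∏ k, p k) / p j [MOD p j] := by
    calc (0 : ℕ) ≡ (∏ i, p i) / p ν * (p ν / 2 - 1) [MOD p j] :=
          (Nat.modEq_zero_iff_dvd.mpr h1).symm
      _ ≡ ∑ i ∈ Finset.univ.erase ν, (∏ k, p k) / p i [MOD p j] := h'
      _ = (∏ k, p k) / p j + ∑ i ∈ (Finset.univ.erase ν).erase j, (∏ k, p k) / p i := hsum
      _ ≡ (∏ k, p k) / p j + 0 [MOD p j] :=
          Nat.ModEq.add_left _ (Nat.modEq_zero_iff_dvd.mpr hrest)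
      _ = (∏ k, p k) / p j := by ring
  have hdvd : p j ∣ (∏ k, p k) / p j := Nat.modEq_zero_iff_dvd.mp h0.symm
  rw [hdiv j] at hdvd
  have hcop : Nat.Coprime (p j) (∏ k ∈ Finset.univ.erase j, p k) :=
    Nat.Coprime.prod_right fun i hi => hco j i (Ne.symm (Finset.mem_erase.mp hi).1)
  have h1' : p j = 1 := hcop.eq_one_of_dvd hdvd
  have := hp j
  omega
end

section
/- Let p_1,...,p_s be pairwise coprime integers ≥ 2 with s ≥ 2, p_0 = p_1⋯p_s, and suppose A ∈ [0, P) is the unique residue with A ≡ −Σ_{i=1}^s M_i (P/p_i) (mod P), where P = p_1^{τ_1 k_1}⋯p_s^{τ_s k_s} and each M_i ≡ 1 (mod p_i) is the inverse of P/p_i^{τ_i k_i} mod p_i^{τ_i k_i}. Then A/P ≡ −(1/p_1 + ⋯ + 1/p_s) (mod 1), i.e., A/P = {−(1/p_1 + ⋯ + 1/p_s)}. -/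
theorem stmt9 (s : ℕ) (hs : 2 ≤ s) (p τ k M : Fin s → ℕ)
    (hp : ∀ i, 2 ≤ p i) (hco : ∀ i j, i ≠ j → Nat.Coprime (p i) (p j))
    (hτ : ∀ i, 1 ≤ τ i) (hk : ∀ i, 1 ≤ k i)
    (P : ℕ) (hP : P = ∏ i, p i ^ (τ i * k i))
    (hM : ∀ i, M i * (P / p i ^ (τ i * k i)) ≡ 1 [MOD p i ^ (τ i * k i)])
    (hM1 : ∀ i, M i ≡ 1 [MOD p i])
    (A : ℕ) (hA : A < P)
    (hAc : (A : ℤ) ≡ - ∑ i, (M i : ℤ) * ((P : ℤ) / p i) [ZMOD (P : ℤ)]) :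
    (A : ℝ) / P = Int.fract (- ∑ i, 1 / (p i : ℝ)) := by
  have hPpos : 0 < P := by
    rw [hP]
    exact Finset.prod_pos fun i _ => pow_pos (lt_of_lt_of_le two_pos (hp i)) _
  set d : Fin s → ℤ := fun i => (P : ℤ) / (p i : ℤ) with hd
  have hpd : ∀ i, (p i : ℤ) * d i = (P : ℤ) := by
    intro i
    have h1 : p i ∣ P := by
      rw [hP]
      exact dvd_trans (dvd_pow_self _ (Nat.mul_ne_zero
        (Nat.one_le_iff_ne_zero.mp (hτ i)) (Nat.one_le_iff_ne_zero.mp (hk i))))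
        (Finset.dvd_prod_of_mem _ (Finset.mem_univ i))
    exact Int.mul_ediv_cancel' (Int.natCast_dvd_natCast.mpr h1)
  have hdvdA : (P : ℤ) ∣ (A : ℤ) + ∑ i, d i := by
    have h1 : (P : ℤ) ∣ (A : ℤ) + ∑ i, (M i : ℤ) * d i := by
      have h := hAc.dvd
      have h' : (P : ℤ) ∣ -((- ∑ i, (M i : ℤ) * d i) - (A : ℤ)) := dvd_neg.mpr h
      simpa [neg_sub, sub_neg_eq_add, add_comm] using h'
    have h2 : ∀ i, (P : ℤ) ∣ (1 - (M i : ℤ)) * d i := by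
      intro i
      obtain ⟨c, hc⟩ := (Nat.modEq_iff_dvd).mp (hM1 i)
      push_cast at hc
      refine ⟨c, ?_⟩
      rw [hc]
      calc (p i : ℤ) * c * d i = c * ((p i : ℤ) * d i) := by ring
        _ = (P : ℤ) * c := by rw [hpd i]; ring
    have h3 : (P : ℤ) ∣ (A : ℤ) + ∑ i, (M i : ℤ) * d i + ∑ i, (1 - (M i : ℤ)) * d i :=
      dvd_add h1 (Finset.dvd_sum (fun i _ => h2 i))
    have heq : (A : ℤ) + ∑ i, (M i : ℤ) * d i + ∑ i, (1 - (M i : ℤ)) * d i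
        = (A : ℤ) + ∑ i, d i := by
      rw [add_assoc, ← Finset.sum_add_distrib]
      congr 1
      exact Finset.sum_congr rfl fun i _ => by ring
    rwa [heq] at h3
  obtain ⟨t, ht⟩ := hdvdA
  have hP0 : (P : ℝ) ≠ 0 := Nat.cast_ne_zero.mpr hPpos.ne'
  have hfrac : ∀ i, (1 : ℝ) / (p i : ℝ) = (d i : ℝ) / (P : ℝ) := by
    intro i
    have hc : (p i : ℝ) * (d i : ℝ) = (P : ℝ) := by exact_mod_cast hpd i
    have hpi0 : (p i : ℝ) ≠ 0 := by
      have := hp i; positivity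
    field_simp
    linarith [hc]
  have hsum : - ∑ i, (1 : ℝ) / (p i : ℝ) = (A : ℝ) / (P : ℝ) - (t : ℤ) := by
    have h1 : ∑ i, (1 : ℝ) / (p i : ℝ) = (∑ i, (d i : ℝ)) / (P : ℝ) := by
      rw [Finset.sum_div]
      exact Finset.sum_congr rfl fun i _ => hfrac i
    have h2 : (A : ℝ) + ∑ i, (d i : ℝ) = (P : ℝ) * (t : ℝ) := by
      exact_mod_cast congrArg (Int.cast : ℤ → ℝ) ht
    have h3 : (A : ℝ) / P + (∑ i, (d i : ℝ)) / P = (t : ℝ) := by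
      rw [← add_div, h2, mul_comm, mul_div_assoc, div_self hP0, mul_one]
    rw [h1]
    linarith [h3]
  rw [hsum, Int.fract_sub_intCast, Int.fract_eq_self.mpr]
  constructor
  · positivity
  · rw [div_lt_one (by positivity)]
    exact_mod_cast hA
end

section
/- Let P = p_1^{r_1}⋯p_s^{r_s} with p_i ≥ 2 pairwise coprime and r_i ≥ 1, and suppose the digits satisfy x_{i,r_i} ≠ 0 for all i. Then φ_{p_i}(n) ∈ [[x_i]_{r_i} − p_i^{−r_i}, [x_i]_{r_i}) for all i = 1,...,s if and only if n ≡ ẍ − Σ_{i=1}^s M_i P p_i^{−1} (mod P), where ẍ = Σ_i M_i (P/p_i^{r_i}) ẋ_{i,r_i} and M_i is the inverse of P/p_i^{r_i} mod p_i^{r_i}. -/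
open scoped Classical

/-- sum of digits < p^r -/
lemma sum_digits_lt {p : ℕ} (hp : 2 ≤ p) : ∀ (r : ℕ) (c : ℕ → ℕ), (∀ i < r, c i < p) →
    ∑ i ∈ Finset.range r, c i * p ^ i < p ^ r := by
  intro r
  induction r with
  | zero => simp
  | succ r ih =>
    intro c hc
    rw [Finset.sum_range_succ, pow_succ]
    have h1 := ih c (fun i hi => hc i (hi.trans (Nat.lt_succ_self r)))
    have h2 : c r + 1 ≤ p := hc r (Nat.lt_succ_self r)
    have h3 : (c r + 1) * p ^ r ≤ p * p ^ r := Nat.mul_le_mul_right _ h2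
    have h4 : 0 < p ^ r := Nat.pow_pos (by omega)
    nlinarith [h1, h3]

/-- digit sums are injective -/
lemma digits_inj {p : ℕ} (hp : 2 ≤ p) : ∀ (r : ℕ) (c c' : ℕ → ℕ),
    (∀ i < r, c i < p) → (∀ i < r, c' i < p) →
    (∑ i ∈ Finset.range r, c i * p ^ i) = (∑ i ∈ Finset.range r, c' i * p ^ i) →
    ∀ i < r, c i = c' i := by
  intro r
  induction r with
  | zero => intro c c' _ _ _ i hi; omega
  | succ r ih =>
    intro c c' hc hc' hsum
    have hrw : ∀ d : ℕ → ℕ, ∑ i ∈ Finset.range (r+1), d i * p ^ i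
        = p * (∑ i ∈ Finset.range r, d (i+1) * p ^ i) + d 0 := by
      intro d
      rw [Finset.sum_range_succ']
      simp only [pow_zero, mul_one]
      congr 1
      rw [Finset.mul_sum]
      apply Finset.sum_congr rfl
      intro i _
      rw [pow_succ]; ring
    rw [hrw c, hrw c'] at hsum
    have h0 : c 0 = c' 0 := by
      have h : (p * (∑ i ∈ Finset.range r, c (i+1) * p ^ i) + c 0) % p
          = (p * (∑ i ∈ Finset.range r, c' (i+1) * p ^ i) + c' 0) % p := by rw [hsum]
      rw [Nat.mul_add_mod, Nat.mul_add_mod] at h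
      rwa [Nat.mod_eq_of_lt (hc 0 (by omega)), Nat.mod_eq_of_lt (hc' 0 (by omega))] at h
    have hT : (∑ i ∈ Finset.range r, c (i+1) * p ^ i) = ∑ i ∈ Finset.range r, c' (i+1) * p ^ i := by
      have hp0 : 0 < p := by omega
      have := hsum
      rw [h0] at this
      have h2 : p * (∑ i ∈ Finset.range r, c (i+1) * p ^ i) = p * (∑ i ∈ Finset.range r, c' (i+1) * p ^ i) := by omega
      exact Nat.eq_of_mul_eq_mul_left hp0 h2
    have hrec := ih (fun i => c (i+1)) (fun i => c' (i+1))
      (fun i hi => hc (i+1) (by omega)) (fun i hi => hc' (i+1) (by omega)) hT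
    intro i hi
    match i with
    | 0 => exact h0
    | (k+1) => exact hrec k (by omega)

/-- reconstruction from digits -/
lemma digits_reconstruct {p : ℕ} (hp : 2 ≤ p) : ∀ (r m : ℕ), m < p ^ r →
    ∑ i ∈ Finset.range r, (m / p ^ i % p) * p ^ i = m := by
  intro r
  induction r with
  | zero => intro m hm; simp at hm ⊢; omega
  | succ r ih =>
    intro m hm
    rw [Finset.sum_range_succ']
    have hstep : ∀ i, m / p ^ (i+1) % p * p ^ (i+1) = ((m / p) / p ^ i % p * p ^ i) * p := by
      intro i
      rw [Nat.div_div_eq_div_mul, ← pow_succ']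
      ring
    calc ∑ i ∈ Finset.range r, m / p ^ (i+1) % p * p ^ (i+1) + m / p ^ 0 % p * p ^ 0
        = (∑ i ∈ Finset.range r, (m / p) / p ^ i % p * p ^ i) * p + m % p := by
          rw [Finset.sum_mul]
          simp only [pow_zero, Nat.div_one, mul_one]
          congr 1
          exact Finset.sum_congr rfl fun i _ => hstep i
      _ = (m / p) * p + m % p := by
          rw [ih (m / p) (by
            have hp0 : 0 < p := by omega
            rw [Nat.div_lt_iff_lt_mul hp0, ← pow_succ]
            exact hm)]
      _ = m := by rw [Nat.mul_comm (m/p) p]; exact Nat.div_add_mod m p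

lemma reflect_sum (p r : ℕ) (c : ℕ → ℕ) :
    ∑ i ∈ Finset.range r, c i * p ^ (r - 1 - i)
      = ∑ k ∈ Finset.range r, c (r - 1 - k) * p ^ k := by
  rw [← Finset.sum_range_reflect (fun k => c (r - 1 - k) * p ^ k) r]
  apply Finset.sum_congr rfl
  intro i hi
  simp only [Finset.mem_range] at hi
  congr 2
  omega

lemma reflect_lt {p : ℕ} (hp : 2 ≤ p) (r : ℕ) (c : ℕ → ℕ) (hc : ∀ i < r, c i < p) :
    ∑ i ∈ Finset.range r, c i * p ^ (r - 1 - i) < p ^ r := by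
  rw [reflect_sum]
  exact sum_digits_lt hp r _ (fun k hk => hc _ (by omega))

lemma icc_sum {M : Type*} [AddCommMonoid M] (r : ℕ) (f : ℕ → M) :
    ∑ j ∈ Finset.Icc 1 r, f j = ∑ i ∈ Finset.range r, f (i + 1) := by
  rw [← Finset.Ico_add_one_right_eq_Icc, Finset.sum_Ico_eq_sum_range]
  simp only [Nat.add_sub_cancel]
  exact Finset.sum_congr rfl fun i _ => by rw [Nat.add_comm]

lemma scale {p : ℕ} (hp : 2 ≤ p) (N : ℕ) (f : ℕ → ℕ) (s : Finset ℕ) (hs : ∀ i ∈ s, i < N) :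
    ∑ i ∈ s, (f i : ℝ) / (p : ℝ) ^ (i + 1)
      = ((∑ i ∈ s, f i * p ^ (N - 1 - i) : ℕ) : ℝ) / (p : ℝ) ^ N := by
  have hpne : (p : ℝ) ≠ 0 := by positivity
  push_cast
  rw [Finset.sum_div]
  apply Finset.sum_congr rfl
  intro i hi
  have h : (p : ℝ) ^ N = (p : ℝ) ^ (N - 1 - i) * (p : ℝ) ^ (i + 1) := by
    rw [← pow_add]
    congr 1
    have := hs i hi
    omega
  rw [h, mul_comm ((f i : ℝ)) ((p:ℝ) ^ (N-1-i)), mul_div_mul_left _ _ (by positivity)]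

lemma radInv_eq {p : ℕ} (hp : 2 ≤ p) (n N : ℕ) (hN : n ≤ N) :
    radInv p n = ∑ i ∈ Finset.range N, ((n / p ^ i % p : ℕ) : ℝ) / (p : ℝ) ^ (i + 1) := by
  rw [radInv]
  apply Finset.sum_subset (Finset.range_subset_range.2 hN)
  intro i _ hi
  simp only [Finset.mem_range, not_lt] at hi
  have h : n < p ^ i := lt_of_lt_of_le (Nat.lt_two_pow_self (n := n))
    (le_trans (Nat.pow_le_pow_right (by omega) hi) (Nat.pow_le_pow_left hp i))
  rw [Nat.div_eq_of_lt h]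
  simp

lemma mod_digit {p : ℕ} (hp : 2 ≤ p) {r i : ℕ} (hi : i < r) (n : ℕ) :
    n % p ^ r / p ^ i % p = n / p ^ i % p := by
  have h1 : p ^ r = p ^ i * p ^ (r - i) := by rw [← pow_add]; congr 1; omega
  rw [h1, Nat.mod_mul_right_div_self, Nat.mod_mod_of_dvd _ (dvd_pow_self p (by omega : r - i ≠ 0))]

lemma key {p : ℕ} (hp : 2 ≤ p) {r : ℕ} (hr : 1 ≤ r) (x : ℕ → ℕ)
    (hx : ∀ j, 1 ≤ j → j ≤ r → x j < p) (hxtop : x r ≠ 0) (n : ℕ) :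
    ((∑ j ∈ Finset.Icc 1 r, (x j : ℝ) / (p : ℝ) ^ j) - ((p : ℝ) ^ r)⁻¹ ≤ radInv p n ∧
      radInv p n < ∑ j ∈ Finset.Icc 1 r, (x j : ℝ) / (p : ℝ) ^ j) ↔
    n % p ^ r = (∑ j ∈ Finset.Icc 1 r, x j * p ^ (j - 1)) - p ^ (r - 1) := by
  obtain ⟨r', rfl⟩ : ∃ r', r = r' + 1 := ⟨r - 1, by omega⟩
  have hp0 : 0 < p := by omega
  set d : ℕ → ℕ := fun i => n / p ^ i % p with hd_def
  set t : ℕ → ℕ := fun i => if i = r' then x (r' + 1) - 1 else x (i + 1) with ht_def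
  have hxtop' : 1 ≤ x (r' + 1) := Nat.one_le_iff_ne_zero.2 hxtop
  have hdlt : ∀ i, d i < p := fun i => Nat.mod_lt _ hp0
  have hxlt : ∀ i < r' + 1, x (i + 1) < p := fun i hi => hx (i + 1) (by omega) (by omega)
  have htlt : ∀ i < r' + 1, t i < p := by
    intro i hi
    by_cases h : i = r'
    · simp only [ht_def, h, if_pos rfl]
      have := hx (r' + 1) (by omega) le_rfl
      omega
    · simp only [ht_def, if_neg h]
      exact hxlt i hi
  set N := n + (r' + 1) with hN_def
  set a := ∑ i ∈ Finset.range (r' + 1), d i * p ^ (r' + 1 - 1 - i) with ha_def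
  set b := ∑ i ∈ Finset.range (r' + 1), x (i + 1) * p ^ (r' + 1 - 1 - i) with hb_def
  set T := ∑ i ∈ Finset.Ico (r' + 1) N, d i * p ^ (N - 1 - i) with hT_def
  -- real decomposition
  have hX : ∑ j ∈ Finset.Icc 1 (r' + 1), (x j : ℝ) / (p : ℝ) ^ j
      = (b : ℝ) / (p : ℝ) ^ (r' + 1) := by
    rw [icc_sum (r' + 1) (fun j => (x j : ℝ) / (p : ℝ) ^ j)]
    exact scale hp (r' + 1) (fun i => x (i + 1)) _ (fun i hi => Finset.mem_range.1 hi)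
  have hRad : radInv p n = (a : ℝ) / (p : ℝ) ^ (r' + 1) + (T : ℝ) / (p : ℝ) ^ N := by
    rw [radInv_eq hp n N (by omega), Finset.range_eq_Ico,
      ← Finset.sum_Ico_consecutive _ (Nat.zero_le (r' + 1)) (by omega : r' + 1 ≤ N),
      ← Finset.range_eq_Ico]
    congr 1
    · exact scale hp (r' + 1) d _ (fun i hi => Finset.mem_range.1 hi)
    · exact scale hp N d _ (fun i hi => (Finset.mem_Ico.1 hi).2)
  -- bounds
  have ha_lt : a < p ^ (r' + 1) := reflect_lt hp _ d (fun i _ => hdlt i)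
  have hT_lt : T < p ^ (N - (r' + 1)) := by
    rw [hT_def, Finset.sum_Ico_eq_sum_range]
    have : ∀ i ∈ Finset.range (N - (r' + 1)),
        d (r' + 1 + i) * p ^ (N - 1 - (r' + 1 + i))
          = d (r' + 1 + i) * p ^ ((N - (r' + 1)) - 1 - i) := by
      intro i hi
      simp only [Finset.mem_range] at hi
      rw [show N - 1 - (r' + 1 + i) = N - (r' + 1) - 1 - i from by omega]
    rw [Finset.sum_congr rfl this]
    exact reflect_lt hp _ _ (fun i _ => hdlt _)
  -- real facts
  have hpr : (0 : ℝ) < (p : ℝ) ^ (r' + 1) := by positivity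
  have hpN : (0 : ℝ) < (p : ℝ) ^ N := by positivity
  have hT0 : (0 : ℝ) ≤ (T : ℝ) / (p : ℝ) ^ N := by positivity
  have hprne : ((p : ℝ) ^ (r' + 1)) ≠ 0 := ne_of_gt hpr
  have hTlt : (T : ℝ) / (p : ℝ) ^ N < ((p : ℝ) ^ (r' + 1))⁻¹ := by
    rw [div_lt_iff₀ hpN]
    have hNsplit : (p : ℝ) ^ N = (p : ℝ) ^ (r' + 1) * (p : ℝ) ^ (N - (r' + 1)) := by
      rw [← pow_add]; congr 1; omega
    rw [hNsplit, inv_mul_cancel_left₀ hprne]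
    exact_mod_cast hT_lt
  -- digit identities
  have hm_lt : n % p ^ (r' + 1) < p ^ (r' + 1) := Nat.mod_lt _ (Nat.pow_pos hp0)
  have hm : n % p ^ (r' + 1) = ∑ i ∈ Finset.range (r' + 1), d i * p ^ i := by
    conv_lhs => rw [← digits_reconstruct hp (r' + 1) (n % p ^ (r' + 1)) hm_lt]
    apply Finset.sum_congr rfl
    intro i hi
    rw [mod_digit hp (Finset.mem_range.1 hi) n]
  have hD : (∑ j ∈ Finset.Icc 1 (r' + 1), x j * p ^ (j - 1)) - p ^ (r' + 1 - 1)
      = ∑ i ∈ Finset.range (r' + 1), t i * p ^ i := by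
    rw [icc_sum (r' + 1) (fun j => x j * p ^ (j - 1))]
    simp only [Nat.add_sub_cancel]
    rw [Finset.sum_range_succ, Finset.sum_range_succ]
    have e1 : ∀ i ∈ Finset.range r', x (i + 1) * p ^ i = t i * p ^ i := by
      intro i hi
      simp only [Finset.mem_range] at hi
      rw [ht_def]
      simp only [if_neg (by omega : ¬ i = r')]
    rw [Finset.sum_congr rfl e1]
    have ht_r : t r' = x (r' + 1) - 1 := by rw [ht_def]; simp
    rw [ht_r, Nat.sub_mul, one_mul]
    have hle : p ^ r' ≤ x (r' + 1) * p ^ r' := Nat.le_mul_of_pos_left _ hxtop'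
    omega
  have hb_eq : b = (∑ i ∈ Finset.range (r' + 1), t i * p ^ (r' + 1 - 1 - i)) + 1 := by
    rw [hb_def, reflect_sum p (r' + 1) (fun i => x (i + 1)), reflect_sum p (r' + 1) t]
    rw [Finset.sum_range_succ', Finset.sum_range_succ']
    have e2 : ∀ k ∈ Finset.range r',
        x (r' + 1 - 1 - (k + 1) + 1) * p ^ (k + 1) = t (r' + 1 - 1 - (k + 1)) * p ^ (k + 1) := by
      intro k hk
      simp only [Finset.mem_range] at hk
      rw [ht_def]
      simp only
      rw [if_neg (by omega : ¬ r' + 1 - 1 - (k + 1) = r')]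
    rw [Finset.sum_congr rfl e2]
    simp only [Nat.sub_zero, Nat.add_sub_cancel, pow_zero, mul_one]
    have ht_r : t r' = x (r' + 1) - 1 := by rw [ht_def]; simp
    omega
  -- the two equivalences
  have hiff2 : (a + 1 = b) ↔ n % p ^ (r' + 1)
      = (∑ j ∈ Finset.Icc 1 (r' + 1), x j * p ^ (j - 1)) - p ^ (r' + 1 - 1) := by
    constructor
    · intro hab
      have hsum0 : ∑ i ∈ Finset.range (r' + 1), d i * p ^ (r' + 1 - 1 - i)
          = ∑ i ∈ Finset.range (r' + 1), t i * p ^ (r' + 1 - 1 - i) := by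
        rw [hb_eq] at hab
        omega
      have hsum : ∑ k ∈ Finset.range (r' + 1), d (r' + 1 - 1 - k) * p ^ k
          = ∑ k ∈ Finset.range (r' + 1), t (r' + 1 - 1 - k) * p ^ k := by
        rw [← reflect_sum p (r' + 1) d, ← reflect_sum p (r' + 1) t]
        exact hsum0
      have hrev := digits_inj hp (r' + 1) _ _ (fun k _ => hdlt _)
        (fun k hk => htlt _ (by omega)) hsum
      have hdt : ∀ i < r' + 1, d i = t i := by
        intro i hi
        have h := hrev (r' + 1 - 1 - i) (by omega)
        rwa [show r' + 1 - 1 - (r' + 1 - 1 - i) = i from by omega] at h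
      rw [hm, hD]
      exact Finset.sum_congr rfl fun i hi => by rw [hdt i (Finset.mem_range.1 hi)]
    · intro h
      have hsum : ∑ i ∈ Finset.range (r' + 1), d i * p ^ i
          = ∑ i ∈ Finset.range (r' + 1), t i * p ^ i := by
        rw [← hm]
        rw [h]
        exact hD
      have hdt := digits_inj hp (r' + 1) d t (fun i _ => hdlt i) htlt hsum
      rw [hb_eq]
      have ha2 : a = ∑ i ∈ Finset.range (r' + 1), t i * p ^ (r' + 1 - 1 - i) := by
        rw [ha_def]
        exact Finset.sum_congr rfl fun i hi => by rw [hdt i (Finset.mem_range.1 hi)]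
      omega
  rw [← hiff2, hX, hRad]
  constructor
  · rintro ⟨h1, h2⟩
    have hA : (a : ℝ) / (p : ℝ) ^ (r' + 1) * (p : ℝ) ^ (r' + 1) = a :=
      div_mul_cancel₀ _ hprne
    have hB : (b : ℝ) / (p : ℝ) ^ (r' + 1) * (p : ℝ) ^ (r' + 1) = b :=
      div_mul_cancel₀ _ hprne
    have hI : ((p : ℝ) ^ (r' + 1))⁻¹ * (p : ℝ) ^ (r' + 1) = 1 := inv_mul_cancel₀ hprne
    have h2' : (a : ℝ) + (T : ℝ) / (p : ℝ) ^ N * (p : ℝ) ^ (r' + 1) < b := by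
      have := mul_lt_mul_of_pos_right h2 hpr
      rwa [add_mul, hA, hB] at this
    have h1' : (b : ℝ) - 1 ≤ (a : ℝ) + (T : ℝ) / (p : ℝ) ^ N * (p : ℝ) ^ (r' + 1) := by
      have := mul_le_mul_of_nonneg_right h1 hpr.le
      rwa [sub_mul, add_mul, hA, hB, hI] at this
    have hε0 : (0 : ℝ) ≤ (T : ℝ) / (p : ℝ) ^ N * (p : ℝ) ^ (r' + 1) := mul_nonneg hT0 hpr.le
    have hεlt : (T : ℝ) / (p : ℝ) ^ N * (p : ℝ) ^ (r' + 1) < 1 := by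
      have := mul_lt_mul_of_pos_right hTlt hpr
      rwa [hI] at this
    have c1 : (a : ℝ) < b := by linarith
    have c2 : (b : ℝ) < (a : ℝ) + 2 := by linarith
    have c1' : a < b := by exact_mod_cast c1
    have c2' : b < a + 2 := by exact_mod_cast c2
    omega
  · intro hab
    have hba : (b : ℝ) = (a : ℝ) + 1 := by exact_mod_cast hab.symm
    have hBA : (b : ℝ) / (p : ℝ) ^ (r' + 1)
        = (a : ℝ) / (p : ℝ) ^ (r' + 1) + ((p : ℝ) ^ (r' + 1))⁻¹ := by
      rw [hba, add_div, one_div]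
    constructor
    · rw [hBA]; linarith [hT0]
    · rw [hBA]; linarith [hTlt]

lemma crt {s : ℕ} (q Q M c : Fin s → ℕ) (P : ℕ) (hP : P = ∏ i, q i)
    (hq : ∀ i, 0 < q i) (hco : ∀ i j, i ≠ j → Nat.Coprime (q i) (q j))
    (hQ : ∀ i, Q i = P / q i) (hM : ∀ i, M i * Q i ≡ 1 [MOD q i])
    (hc : ∀ i, c i < q i) (n : ℕ) :
    (∀ i, n % q i = c i) ↔ n ≡ (∑ i, M i * Q i * c i) [MOD P] := by
  have hQi : ∀ i, Q i = ∏ j ∈ Finset.univ.erase i, q j := by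
    intro i
    rw [hQ i, hP, ← Finset.mul_prod_erase Finset.univ q (Finset.mem_univ i),
      Nat.mul_div_cancel_left _ (hq i)]
  have hdvdP : ∀ i, q i ∣ P := fun i => hP ▸ Finset.dvd_prod_of_mem q (Finset.mem_univ i)
  have hclaim : ∀ i, (∑ j, M j * Q j * c j) ≡ c i [MOD q i] := by
    intro i
    have hsplit : (∑ j, M j * Q j * c j)
        = M i * Q i * c i + ∑ j ∈ Finset.univ.erase i, M j * Q j * c j :=
      (Finset.add_sum_erase _ _ (Finset.mem_univ i)).symm
    have h0 : ∑ j ∈ Finset.univ.erase i, M j * Q j * c j ≡ 0 [MOD q i] := by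
      rw [Nat.modEq_zero_iff_dvd]
      apply Finset.dvd_sum
      intro j hj
      have hji : i ≠ j := fun h => (Finset.mem_erase.1 hj).1 h.symm
      have hd : q i ∣ Q j := by
        rw [hQi j]
        exact Finset.dvd_prod_of_mem q (Finset.mem_erase.2 ⟨hji, Finset.mem_univ i⟩)
      exact (hd.mul_left (M j)).mul_right (c j)
    calc (∑ j, M j * Q j * c j) = M i * Q i * c i + ∑ j ∈ Finset.univ.erase i, M j * Q j * c j := hsplit
      _ ≡ M i * Q i * c i + 0 [MOD q i] := Nat.ModEq.add_left _ h0
      _ = M i * Q i * c i := by rw [Nat.add_zero]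
      _ ≡ 1 * c i [MOD q i] := (hM i).mul_right (c i)
      _ = c i := one_mul _
  constructor
  · intro h
    have hdvd : ∀ i, (q i : ℤ) ∣ ((∑ j, M j * Q j * c j : ℕ) : ℤ) - (n : ℤ) := by
      intro i
      have h1 : n ≡ c i [MOD q i] := by
        rw [Nat.ModEq, h i, Nat.mod_eq_of_lt (hc i)]
      exact (Nat.modEq_iff_dvd).1 (h1.trans (hclaim i).symm)
    have hPdvd : (P : ℤ) ∣ ((∑ j, M j * Q j * c j : ℕ) : ℤ) - (n : ℤ) := by
      rw [hP, Nat.cast_prod]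
      exact Fintype.prod_dvd_of_coprime
        (fun i j hij => ((hco i j hij).isCoprime))
        (fun i => hdvd i)
    exact (Nat.modEq_iff_dvd).2 hPdvd
  · intro h i
    have h3 := (h.of_dvd (hdvdP i)).trans (hclaim i)
    rwa [Nat.ModEq, Nat.mod_eq_of_lt (hc i)] at h3


theorem stmt10 (s : ℕ) (hs : 1 ≤ s) (p r M : Fin s → ℕ)
    (hp : ∀ i, 2 ≤ p i) (hco : ∀ i j, i ≠ j → Nat.Coprime (p i) (p j))
    (hr : ∀ i, 1 ≤ r i)
    (P : ℕ) (hP : P = ∏ i, p i ^ r i)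
    (hM : ∀ i, M i * (P / p i ^ r i) ≡ 1 [MOD p i ^ r i])
    (x : Fin s → ℕ → ℕ) (hx : ∀ i j, 1 ≤ j → j ≤ r i → x i j < p i)
    (hxtop : ∀ i, x i (r i) ≠ 0) (n : ℕ) :
    (∀ i, (∑ j ∈ Finset.Icc 1 (r i), (x i j : ℝ) / (p i : ℝ) ^ j) - ((p i : ℝ) ^ r i)⁻¹
            ≤ radInv (p i) n ∧
        radInv (p i) n < ∑ j ∈ Finset.Icc 1 (r i), (x i j : ℝ) / (p i : ℝ) ^ j) ↔
    (n : ℤ) ≡ (∑ i, (M i : ℤ) * ((P : ℤ) / (p i : ℤ) ^ r i) *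
          (∑ j ∈ Finset.Icc 1 (r i), (x i j : ℤ) * (p i : ℤ) ^ (j - 1)))
        - ∑ i, (M i : ℤ) * ((P : ℤ) / p i) [ZMOD (P : ℤ)] := by
  have hp0 : ∀ i, 0 < p i := fun i => by have := hp i; omega
  have hqpos : ∀ i, 0 < p i ^ r i := fun i => Nat.pow_pos (hp0 i)
  set c : Fin s → ℕ :=
    fun i => (∑ j ∈ Finset.Icc 1 (r i), x i j * p i ^ (j - 1)) - p i ^ (r i - 1) with hc_def
  have hxdot_lt : ∀ i, (∑ j ∈ Finset.Icc 1 (r i), x i j * p i ^ (j - 1)) < p i ^ r i := by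
    intro i
    rw [icc_sum (r i) (fun j => x i j * p i ^ (j - 1))]
    have he : ∀ k ∈ Finset.range (r i), x i (k + 1) * p i ^ (k + 1 - 1)
        = x i (k + 1) * p i ^ k := by
      intro k _
      rw [Nat.add_sub_cancel]
    rw [Finset.sum_congr rfl he]
    exact sum_digits_lt (hp i) (r i) _ (fun k hk => hx i (k + 1) (by omega) (by omega))
  have hxdot_ge : ∀ i, p i ^ (r i - 1) ≤ ∑ j ∈ Finset.Icc 1 (r i), x i j * p i ^ (j - 1) := by
    intro i
    calc p i ^ (r i - 1) ≤ x i (r i) * p i ^ (r i - 1) :=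
          Nat.le_mul_of_pos_left _ (Nat.one_le_iff_ne_zero.2 (hxtop i))
      _ ≤ ∑ j ∈ Finset.Icc 1 (r i), x i j * p i ^ (j - 1) :=
          Finset.single_le_sum (f := fun j => x i j * p i ^ (j - 1))
            (fun j _ => Nat.zero_le _) (Finset.mem_Icc.2 ⟨hr i, le_rfl⟩)
  have hc_lt : ∀ i, c i < p i ^ r i := fun i => lt_of_le_of_lt (Nat.sub_le _ _) (hxdot_lt i)
  have hdvdP : ∀ i, p i ^ r i ∣ P := fun i =>
    hP ▸ Finset.dvd_prod_of_mem (fun i => p i ^ r i) (Finset.mem_univ i)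
  have step1 : (∀ i, (∑ j ∈ Finset.Icc 1 (r i), (x i j : ℝ) / (p i : ℝ) ^ j)
        - ((p i : ℝ) ^ r i)⁻¹ ≤ radInv (p i) n ∧
      radInv (p i) n < ∑ j ∈ Finset.Icc 1 (r i), (x i j : ℝ) / (p i : ℝ) ^ j)
      ↔ ∀ i, n % p i ^ r i = c i :=
    forall_congr' fun i => key (hp i) (hr i) (x i) (hx i) (hxtop i) n
  rw [step1,
    crt (fun i => p i ^ r i) (fun i => P / p i ^ r i) M c P hP hqpos
      (fun i j hij => Nat.Coprime.pow _ _ (hco i j hij)) (fun i => rfl) hM hc_lt n]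
  -- identify the integer right-hand side with the natural CRT residue
  have hPp : ∀ i, P / p i = (P / p i ^ r i) * p i ^ (r i - 1) := by
    intro i
    have h1 : P = ((P / p i ^ r i) * p i ^ (r i - 1)) * p i := by
      rw [mul_assoc, ← pow_succ, show r i - 1 + 1 = r i from by have := hr i; omega]
      exact (Nat.div_mul_cancel (hdvdP i)).symm
    conv_lhs => rw [h1]
    rw [Nat.mul_div_cancel _ (hp0 i)]
  have hcast : (∑ i, (M i : ℤ) * ((P : ℤ) / (p i : ℤ) ^ r i) *
          (∑ j ∈ Finset.Icc 1 (r i), (x i j : ℤ) * (p i : ℤ) ^ (j - 1)))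
        - (∑ i, (M i : ℤ) * ((P : ℤ) / (p i : ℤ)))
      = ((∑ i, M i * (P / p i ^ r i) * c i : ℕ) : ℤ) := by
    have hc_cast : ∀ i, ((c i : ℕ) : ℤ)
        = (∑ j ∈ Finset.Icc 1 (r i), (x i j : ℤ) * (p i : ℤ) ^ (j - 1))
          - (p i : ℤ) ^ (r i - 1) := by
      intro i
      rw [hc_def]
      simp only
      rw [Nat.cast_sub (hxdot_ge i)]
      push_cast
      rfl
    have hz1 : ∀ i : Fin s, (P : ℤ) / (p i : ℤ) ^ r i = ((P / p i ^ r i : ℕ) : ℤ) := by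
      intro i
      rw [Int.natCast_div]
      push_cast
      rfl
    have hz2 : ∀ i : Fin s, (P : ℤ) / (p i : ℤ)
        = ((P / p i ^ r i : ℕ) : ℤ) * (p i : ℤ) ^ (r i - 1) := by
      intro i
      rw [← Int.natCast_pow, ← Int.natCast_mul, ← hPp i, Int.natCast_div]
    rw [Nat.cast_sum]
    rw [← Finset.sum_sub_distrib]
    apply Finset.sum_congr rfl
    intro i _
    rw [hz1 i, hz2 i, Nat.cast_mul, Nat.cast_mul, hc_cast i]
    ring
  rw [hcast, Nat.modEq_iff_dvd]
  exact Int.modEq_iff_dvd.symm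
end
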